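/- arXiv:1910.04598 — 3 statements merged into one kernel-verified Lean document; each statement's English description precedes it below -/
import Mathlib

section
/- In the root system B_l (l ≥ 2) with simple roots α₁,…,α_l and Θ = Σ∖{α₁,α₂}, classify positive roots outside ⟨Θ⟩ by their coefficient pair (n₁,n₂) on (α₁,α₂): 𝔪₁ = roots with (1,0), 𝔪₂ = roots with (0,1), 𝔪₃ = roots with (1,1), 𝔪₄ = roots with (1,2). Then: (a) these four sets exhaust the positive roots outside ⟨Θ⟩, i.e. the only coefficient pairs occurring are (1,0),(0,1),(1,1),(1,2); (b) for every triple of positive roots (α, β, α+β) with all three outside ⟨Θ⟩, the distribution of components is (up to swapping α and β) one of: (𝔪₁,𝔪₂,𝔪₃) or (𝔪₂,𝔪₃,𝔪₄). -/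
set_option maxHeartbeats 1000000


/-- Positive roots of `B_l`, encoded by their coefficient functions
`c : ℕ → ℕ` on the simple roots `α₁,…,α_l` (indices `1,…,l`; other indices 0).
The positive roots are `λ_j = α_j+⋯+α_l`, `λ_i−λ_j = α_i+⋯+α_{j−1}` (`i<j`)
and `λ_i+λ_j = α_i+⋯+α_{j−1}+2α_j+⋯+2α_l` (`i<j`). -/
def IsPosRootB (l : ℕ) (c : ℕ → ℕ) : Prop :=
  (∃ j, 1 ≤ j ∧ j ≤ l ∧ c = fun k => if j ≤ k ∧ k ≤ l then 1 else 0) ∨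
  (∃ i j, 1 ≤ i ∧ i < j ∧ j ≤ l ∧ c = fun k => if i ≤ k ∧ k < j then 1 else 0) ∨
  (∃ i j, 1 ≤ i ∧ i < j ∧ j ≤ l ∧
    c = fun k => if i ≤ k ∧ k < j then 1 else if j ≤ k ∧ k ≤ l then 2 else 0)

lemma posRoot_pairs (l : ℕ) (hl : 2 ≤ l) (c : ℕ → ℕ) (h : IsPosRootB l c) :
    (c 1 = 0 ∧ c 2 = 0) ∨ (c 1, c 2) = (1,0) ∨ (c 1, c 2) = (0,1) ∨
    (c 1, c 2) = (1,1) ∨ (c 1, c 2) = (1,2) := by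
  rcases h with ⟨j, h1, h2, hc⟩ | ⟨i, j, h1, h2, h3, hc⟩ | ⟨i, j, h1, h2, h3, hc⟩ <;>
    subst hc <;> simp only [Prod.mk.injEq] <;>
    rcases le_or_gt j 2 with h | h <;> split_ifs <;> omega

/-- In `B_l` (`l ≥ 2`) with `Θ = Σ∖{α₁,α₂}`: (a) every positive root outside
`⟨Θ⟩` has `(α₁,α₂)`-coefficient pair `(1,0)`, `(0,1)`, `(1,1)` or `(1,2)`;
(b) every triple `(α, β, α+β)` of positive roots outside `⟨Θ⟩` distributes,
up to swapping `α` and `β`, as `(𝔪₁,𝔪₂,𝔪₃)` or `(𝔪₂,𝔪₃,𝔪₄)`. -/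
theorem stmt9 (l : ℕ) (hl : 2 ≤ l) :
    (∀ c : ℕ → ℕ, IsPosRootB l c → ¬(c 1 = 0 ∧ c 2 = 0) →
      (c 1, c 2) = (1,0) ∨ (c 1, c 2) = (0,1) ∨ (c 1, c 2) = (1,1) ∨ (c 1, c 2) = (1,2)) ∧
    (∀ α β γ : ℕ → ℕ, IsPosRootB l α → IsPosRootB l β → IsPosRootB l γ →
      γ = (fun k => α k + β k) →
      ¬(α 1 = 0 ∧ α 2 = 0) → ¬(β 1 = 0 ∧ β 2 = 0) → ¬(γ 1 = 0 ∧ γ 2 = 0) →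
      ((((α 1, α 2) = (1,0) ∧ (β 1, β 2) = (0,1)) ∨
        ((α 1, α 2) = (0,1) ∧ (β 1, β 2) = (1,0))) ∧ (γ 1, γ 2) = (1,1)) ∨
      ((((α 1, α 2) = (0,1) ∧ (β 1, β 2) = (1,1)) ∨
        ((α 1, α 2) = (1,1) ∧ (β 1, β 2) = (0,1))) ∧ (γ 1, γ 2) = (1,2))) := by
  constructor
  · intro c hc hne
    rcases posRoot_pairs l hl c hc with h | h
    · exact absurd h hne
    · exact h
  · intro α β γ hα hβ hγ hsum hα0 hβ0 hγ0
    have h1 : γ 1 = α 1 + β 1 := by rw [hsum]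
    have h2 : γ 2 = α 2 + β 2 := by rw [hsum]
    have ha := posRoot_pairs l hl α hα
    have hb := posRoot_pairs l hl β hβ
    have hg := posRoot_pairs l hl γ hγ
    clear hsum hα hβ hγ
    simp only [Prod.mk.injEq] at ha hb hg hα0 hβ0 hγ0 ⊢
    rcases ha with ha|ha|ha|ha|ha <;> rcases hb with hb|hb|hb|hb|hb <;>
      rcases hg with hg|hg|hg|hg|hg <;> omega
end

section
/- In the root system C_l with simple roots α₁,…,α_l and fixed p with 1 ≤ p ≤ l−1, set Θ = Σ∖{α_p, α_l} and classify positive roots outside ⟨Θ⟩ by their coefficient pair (n_p, n_l) on (α_p, α_l): 𝔪₁ = roots with (0,1), 𝔪₂ = roots with (1,0), 𝔪₃ = roots with (1,1), 𝔪₄ = roots with (2,1). Then these four sets exhaust the positive roots outside ⟨Θ⟩, and for every triple (α, β, α+β) of positive roots outside ⟨Θ⟩ the component distribution is (up to swap) either (𝔪₁,𝔪₂,𝔪₃) or (𝔪₂,𝔪₃,𝔪₄). -/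
/-- Positive roots of `C_l`, encoded by their coefficient functions
`c : ℕ → ℕ` on the simple roots `α₁,…,α_l` (indices `1,…,l`).  The positive
roots are `λ_i−λ_j = α_i+⋯+α_{j−1}` (`i<j`) and
`λ_i+λ_j = α_i+⋯+α_{j−1}+2α_j+⋯+2α_{l−1}+α_l` (`i≤j`). -/
def IsPosRootC (l : ℕ) (c : ℕ → ℕ) : Prop :=
  (∃ i j, 1 ≤ i ∧ i < j ∧ j ≤ l ∧ c = fun k => if i ≤ k ∧ k < j then 1 else 0) ∨
  (∃ i j, 1 ≤ i ∧ i ≤ j ∧ j ≤ l ∧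
    c = fun k => if i ≤ k ∧ k < j then 1
                 else if j ≤ k ∧ k < l then 2
                 else if k = l then 1 else 0)

lemma auxC (l p : ℕ) (hp : 1 ≤ p) (hpl : p ≤ l - 1) (hl : 2 ≤ l) (c : ℕ → ℕ)
    (h : IsPosRootC l c) : c p ≤ 2 ∧ c l ≤ 1 ∧ (c l = 0 → c p ≤ 1) := by
  rcases h with ⟨i, j, hi, hij, hjl, rfl⟩ | ⟨i, j, hi, hij, hjl, rfl⟩ <;>
    simp only [] <;> split_ifs <;> first | omega | exact ⟨by omega, by omega, fun h => h.elim⟩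

/-- In `C_l` with `Θ = Σ∖{α_p, α_l}` (`1 ≤ p ≤ l−1`): every positive root
outside `⟨Θ⟩` has `(α_p,α_l)`-coefficient pair `(0,1)` (`𝔪₁`), `(1,0)` (`𝔪₂`),
`(1,1)` (`𝔪₃`) or `(2,1)` (`𝔪₄`), and every triple `(α, β, α+β)` of positive
roots outside `⟨Θ⟩` distributes, up to swapping `α` and `β`, as `(𝔪₁,𝔪₂,𝔪₃)`
or `(𝔪₂,𝔪₃,𝔪₄)`. -/
theorem stmt10 (l p : ℕ) (hp : 1 ≤ p) (hpl : p ≤ l - 1) (hl : 2 ≤ l) :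
    (∀ c : ℕ → ℕ, IsPosRootC l c → ¬(c p = 0 ∧ c l = 0) →
      (c p, c l) = (0,1) ∨ (c p, c l) = (1,0) ∨ (c p, c l) = (1,1) ∨ (c p, c l) = (2,1)) ∧
    (∀ α β γ : ℕ → ℕ, IsPosRootC l α → IsPosRootC l β → IsPosRootC l γ →
      γ = (fun k => α k + β k) →
      ¬(α p = 0 ∧ α l = 0) → ¬(β p = 0 ∧ β l = 0) → ¬(γ p = 0 ∧ γ l = 0) →
      ((((α p, α l) = (0,1) ∧ (β p, β l) = (1,0)) ∨
        ((α p, α l) = (1,0) ∧ (β p, β l) = (0,1))) ∧ (γ p, γ l) = (1,1)) ∨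
      ((((α p, α l) = (1,0) ∧ (β p, β l) = (1,1)) ∨
        ((α p, α l) = (1,1) ∧ (β p, β l) = (1,0))) ∧ (γ p, γ l) = (2,1))) := by
  refine ⟨fun c hc hne => ?_, fun α β γ hα hβ hγ heq hna hnb hng => ?_⟩
  · obtain ⟨h1, h2, h3⟩ := auxC l p hp hpl hl c hc
    simp only [Prod.mk.injEq]
    omega
  · obtain ⟨a1, a2, a3⟩ := auxC l p hp hpl hl α hα
    obtain ⟨b1, b2, b3⟩ := auxC l p hp hpl hl β hβ
    obtain ⟨g1, g2, g3⟩ := auxC l p hp hpl hl γ hγ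
    have e1 : γ p = α p + β p := by rw [heq]
    have e2 : γ l = α l + β l := by rw [heq]
    clear heq hα hβ hγ
    have ha : (α p = 0 ∧ α l = 1) ∨ (α p = 1 ∧ α l = 0) ∨ (α p = 1 ∧ α l = 1) ∨
        (α p = 2 ∧ α l = 1) := by omega
    have hb : (β p = 0 ∧ β l = 1) ∨ (β p = 1 ∧ β l = 0) ∨ (β p = 1 ∧ β l = 1) ∨
        (β p = 2 ∧ β l = 1) := by omega
    have hg : (γ p = 0 ∧ γ l = 1) ∨ (γ p = 1 ∧ γ l = 0) ∨ (γ p = 1 ∧ γ l = 1) ∨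
        (γ p = 2 ∧ γ l = 1) := by omega
    clear a1 a2 a3 b1 b2 b3 g1 g2 g3 hna hnb hng
    simp only [Prod.mk.injEq]
    rcases ha with ⟨h1, h2⟩ | ⟨h1, h2⟩ | ⟨h1, h2⟩ | ⟨h1, h2⟩ <;>
      rcases hb with ⟨h3, h4⟩ | ⟨h3, h4⟩ | ⟨h3, h4⟩ | ⟨h3, h4⟩ <;>
      rcases hg with ⟨h5, h6⟩ | ⟨h5, h6⟩ | ⟨h5, h6⟩ | ⟨h5, h6⟩ <;>
      omega
end

section
/- In the root system D_l (l ≥ 4) with simple roots α₁,…,α_l and Θ = Σ∖{α_{l−1}, α_l}, classify positive roots outside ⟨Θ⟩ by their coefficient pair (n_{l−1}, n_l) on (α_{l−1}, α_l): 𝔪₁ = roots with (1,0), 𝔪₂ = roots with (0,1), 𝔪₃ = roots with (1,1). Then these three sets exhaust the positive roots outside ⟨Θ⟩, and for every triple of positive roots (α, β, α+β) all lying outside ⟨Θ⟩, necessarily (up to swapping α and β) α ∈ 𝔪₁, β ∈ 𝔪₂ and α+β ∈ 𝔪₃. -/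
/-- Positive roots of `D_l` (`l ≥ 4`), encoded by their coefficient functions
`c : ℕ → ℕ` on the simple roots `α₁,…,α_l` (indices `1,…,l`).  The positive
roots are `λ_i−λ_j = α_i+⋯+α_{j−1}` (`i<j≤l`),
`λ_i+λ_l = α_i+⋯+α_{l−2}+α_l` (`i<l`), and
`λ_i+λ_j = α_i+⋯+α_{j−1}+2α_j+⋯+2α_{l−2}+α_{l−1}+α_l` (`i<j≤l−1`). -/
def IsPosRootD (l : ℕ) (c : ℕ → ℕ) : Prop :=
  (∃ i j, 1 ≤ i ∧ i < j ∧ j ≤ l ∧ c = fun k => if i ≤ k ∧ k < j then 1 else 0) ∨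
  (∃ i, 1 ≤ i ∧ i < l ∧
    c = fun k => if i ≤ k ∧ k ≤ l - 2 then 1 else if k = l then 1 else 0) ∨
  (∃ i j, 1 ≤ i ∧ i < j ∧ j ≤ l - 1 ∧
    c = fun k => if i ≤ k ∧ k < j then 1
                 else if j ≤ k ∧ k ≤ l - 2 then 2
                 else if k = l - 1 ∨ k = l then 1 else 0)

lemma pairD (l : ℕ) (hl : 4 ≤ l) (c : ℕ → ℕ) (h : IsPosRootD l c) :
    (c (l-1) = 0 ∧ c l = 0) ∨ (c (l-1) = 1 ∧ c l = 0) ∨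
    (c (l-1) = 0 ∧ c l = 1) ∨ (c (l-1) = 1 ∧ c l = 1) := by
  rcases h with ⟨i, j, hi, hij, hj, hc⟩ | ⟨i, hi, hil, hc⟩ | ⟨i, j, hi, hij, hj, hc⟩ <;>
    subst hc <;> simp only [] <;> split_ifs <;> omega

/-- In `D_l` (`l ≥ 4`) with `Θ = Σ∖{α_{l−1}, α_l}`: every positive root
outside `⟨Θ⟩` has `(α_{l−1},α_l)`-coefficient pair `(1,0)` (`𝔪₁`), `(0,1)`
(`𝔪₂`) or `(1,1)` (`𝔪₃`), and for every triple `(α, β, α+β)` of positive roots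
outside `⟨Θ⟩`, necessarily (up to swapping `α` and `β`) `α ∈ 𝔪₁`, `β ∈ 𝔪₂`
and `α+β ∈ 𝔪₃`. -/
theorem stmt11 (l : ℕ) (hl : 4 ≤ l) :
    (∀ c : ℕ → ℕ, IsPosRootD l c → ¬(c (l-1) = 0 ∧ c l = 0) →
      (c (l-1), c l) = (1,0) ∨ (c (l-1), c l) = (0,1) ∨ (c (l-1), c l) = (1,1)) ∧
    (∀ α β γ : ℕ → ℕ, IsPosRootD l α → IsPosRootD l β → IsPosRootD l γ →
      γ = (fun k => α k + β k) →
      ¬(α (l-1) = 0 ∧ α l = 0) → ¬(β (l-1) = 0 ∧ β l = 0) →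
      ¬(γ (l-1) = 0 ∧ γ l = 0) →
      (((α (l-1), α l) = (1,0) ∧ (β (l-1), β l) = (0,1)) ∨
        ((α (l-1), α l) = (0,1) ∧ (β (l-1), β l) = (1,0))) ∧
        (γ (l-1), γ l) = (1,1)) := by
  constructor
  · intro c hc hne
    have := pairD l hl c hc
    simp only [Prod.mk.injEq]
    omega
  · intro α β γ hα hβ hγ heq hne1 hne2 hne3
    have h1 := pairD l hl α hα
    have h2 := pairD l hl β hβ
    have h3 := pairD l hl γ hγ
    have e1 : γ (l-1) = α (l-1) + β (l-1) := by rw [heq]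
    have e2 : γ l = α l + β l := by rw [heq]
    simp only [Prod.mk.injEq]
    omega
end
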